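/- Let Y and Y' be independent exponential random variables with rate 1, and let t > 0. Then E[exp(-t·Y·Y')] ≤ log(1+t)/t. -/

import Mathlib

open MeasureTheory ProbabilityTheory Real Set Filter Topology

lemma aux_expMeasure_integral (g : ℝ → ℝ) :
    ∫ x, g x ∂(expMeasure 1) = ∫ x in Ioi 0, Real.exp (-x) * g x := by
  have hpdf : ∀ x, exponentialPDFReal 1 x = if 0 ≤ x then Real.exp (-x) else 0 := by
    intro x
    rw [exponentialPDFReal, gammaPDFReal]
    simp [Real.rpow_one, Real.Gamma_one]
  have hmeas : Measurable fun x => (exponentialPDFReal 1 x).toNNReal :=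
    (measurable_exponentialPDFReal 1).real_toNNReal
  have h1 : expMeasure 1 = MeasureTheory.Measure.withDensity volume
      (fun x => ((exponentialPDFReal 1 x).toNNReal : ENNReal)) := by
    rfl
  rw [h1, integral_withDensity_eq_integral_smul hmeas]
  have h2 : ∀ x, ((exponentialPDFReal 1 x).toNNReal : ℝ) • g x
      = (Ici (0:ℝ)).indicator (fun x => Real.exp (-x) * g x) x := by
    intro x
    rw [smul_eq_mul, Real.coe_toNNReal _ (exponentialPDFReal_nonneg one_pos x), hpdf]
    by_cases hx : 0 ≤ x
    · rw [if_pos hx]; rw [Set.indicator_of_mem (mem_Ici.mpr hx)]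
    · rw [if_neg hx]; rw [Set.indicator_of_notMem (by simpa [mem_Ici] using hx), zero_mul]
  simp only [NNReal.smul_def] at h2 ⊢
  rw [show (fun x => ((exponentialPDFReal 1 x).toNNReal : ℝ) • g x)
      = (Ici (0:ℝ)).indicator (fun x => Real.exp (-x) * g x) from funext h2,
    integral_indicator measurableSet_Ici, integral_Ici_eq_integral_Ioi]

lemma aux_int_exp (b : ℝ) (hb : 0 < b) :
    ∫ y in Ioi (0:ℝ), Real.exp (-(b * y)) = 1 / b := by
  have hderiv : ∀ y ∈ Ici (0:ℝ),
      HasDerivAt (fun y => -Real.exp (-(b * y)) / b) (Real.exp (-(b * y))) y := by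
    intro y _
    have h1 : HasDerivAt (fun y : ℝ => -(b * y)) (-b) y := by
      simpa using ((hasDerivAt_id y).const_mul (-b))
    have := ((h1.exp).neg).div_const b
    refine this.congr_deriv ?_
    field_simp
  have hint : IntegrableOn (fun y => Real.exp (-(b * y))) (Ioi (0:ℝ)) := by
    simpa [neg_mul] using exp_neg_integrableOn_Ioi 0 hb
  have htend : Tendsto (fun y => -Real.exp (-(b * y)) / b) atTop (𝓝 0) := by
    have hb0 : Tendsto (fun y : ℝ => b * y) atTop atTop :=
      Filter.Tendsto.const_mul_atTop hb tendsto_id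
    have h0 : Tendsto (fun y : ℝ => Real.exp (-(b * y))) atTop (𝓝 0) :=
      Real.tendsto_exp_neg_atTop_nhds_zero.comp hb0
    simpa using (h0.neg).div_const b
  rw [integral_Ioi_of_hasDerivAt_of_tendsto' hderiv hint htend]
  field_simp
  simp

lemma aux_final (t : ℝ) (ht : 0 < t) :
    ∫ x in Ioi (0:ℝ), Real.exp (-x) * (1 / (1 + t * (1 - Real.exp (-x))))
      = Real.log (1 + t) / t := by
  set u : ℝ → ℝ := fun x => 1 + t * (1 - Real.exp (-x)) with hu
  have hupos : ∀ x ∈ Ici (0:ℝ), 0 < u x := by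
    intro x hx
    have : Real.exp (-x) ≤ 1 := Real.exp_le_one_iff.mpr (by simpa using hx.out)
    have : 0 ≤ 1 - Real.exp (-x) := by linarith
    have : 0 ≤ t * (1 - Real.exp (-x)) := mul_nonneg ht.le this
    simp only [hu]; linarith
  have hud : ∀ x : ℝ, HasDerivAt u (t * Real.exp (-x)) x := by
    intro x
    have h1 : HasDerivAt (fun x : ℝ => Real.exp (-x)) (-Real.exp (-x)) x := by
      simpa using ((hasDerivAt_id x).neg).exp
    have := ((h1.const_sub 1).const_mul t).const_add 1
    simpa [hu] using this
  have hderiv : ∀ x ∈ Ici (0:ℝ),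
      HasDerivAt (fun x => Real.log (u x) / t)
        (Real.exp (-x) * (1 / (1 + t * (1 - Real.exp (-x))))) x := by
    intro x hx
    have := (((hud x).log (ne_of_gt (hupos x hx)))).div_const t
    refine this.congr_deriv ?_
    rw [div_div, mul_comm t (Real.exp (-x)), mul_div_mul_right _ _ (ne_of_gt ht), mul_one_div]
  have hint : IntegrableOn
      (fun x => Real.exp (-x) * (1 / (1 + t * (1 - Real.exp (-x))))) (Ioi (0:ℝ)) := by
    have hbase : IntegrableOn (fun x => Real.exp (-x)) (Ioi (0:ℝ)) := by
      simpa using exp_neg_integrableOn_Ioi 0 one_pos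
    refine hbase.mono' ?_ ?_
    · refine ((Real.measurable_exp.comp measurable_neg).mul
        (measurable_const.div ?_)).aestronglyMeasurable
      exact measurable_const.add (measurable_const.mul
        (measurable_const.sub (Real.measurable_exp.comp measurable_neg)))
    · filter_upwards [ae_restrict_mem measurableSet_Ioi] with x hx
      have h1 : (1:ℝ) ≤ u x := by
        have : Real.exp (-x) ≤ 1 := Real.exp_le_one_iff.mpr (by simpa using (le_of_lt hx.out))
        have h2 : 0 ≤ t * (1 - Real.exp (-x)) := mul_nonneg ht.le (by linarith)
        simp only [hu]; linarith
      have hpos : 0 < u x := lt_of_lt_of_le one_pos h1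
      rw [Real.norm_eq_abs, abs_mul, abs_of_nonneg (Real.exp_pos _).le,
        abs_of_nonneg (by positivity : (0:ℝ) ≤ 1 / u x)]
      have : 1 / u x ≤ 1 := by
        rw [div_le_one hpos]; exact h1
      nlinarith [Real.exp_pos (-x)]
  have htend : Tendsto (fun x => Real.log (u x) / t) atTop (𝓝 (Real.log (1 + t) / t)) := by
    have h0 : Tendsto (fun x : ℝ => Real.exp (-x)) atTop (𝓝 0) :=
      Real.tendsto_exp_neg_atTop_nhds_zero
    have hu' : Tendsto u atTop (𝓝 (1 + t * (1 - 0))) :=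
      tendsto_const_nhds.add (((tendsto_const_nhds.sub h0)).const_mul t)
    have hlog : Tendsto (fun x => Real.log (u x)) atTop (𝓝 (Real.log (1 + t))) := by
      have := (Real.continuousAt_log (by linarith : (1:ℝ) + t * (1 - 0) ≠ 0)).tendsto.comp hu'
      simpa [Function.comp_def] using this
    exact hlog.div_const t
  rw [integral_Ioi_of_hasDerivAt_of_tendsto' hderiv hint htend]
  simp [hu]

theorem stmt_0 {Ω : Type*} [MeasurableSpace Ω] (μ : Measure Ω) [IsProbabilityMeasure μ]
    (Y Y' : Ω → ℝ) (hY : Measurable Y) (hY' : Measurable Y')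
    (hYd : Measure.map Y μ = expMeasure 1) (hY'd : Measure.map Y' μ = expMeasure 1)
    (hInd : IndepFun Y Y' μ) (t : ℝ) (ht : 0 < t) :
    ∫ ω, Real.exp (-(t * Y ω * Y' ω)) ∂μ ≤ Real.log (1 + t) / t := by
  set ν : Measure ℝ := expMeasure 1 with hν
  haveI : IsProbabilityMeasure ν := isProbabilityMeasure_expMeasure one_pos
  have hν0 : ν (Iio 0) = 0 := by
    rw [hν, expMeasure, gammaMeasure, withDensity_apply _ measurableSet_Iio]
    exact lintegral_exponentialPDF_of_nonpos le_rfl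
  have hνae : ∀ᵐ x ∂ν, 0 ≤ x := by
    rw [ae_iff]
    have hset : {x : ℝ | ¬ 0 ≤ x} = Iio 0 := by ext x; simp [not_le]
    rw [hset]; exact hν0
  have hνIci : ν (Ici 0) = 1 := by
    rw [← compl_Iio, measure_compl measurableSet_Iio (measure_ne_top ν _), hν0, measure_univ]
    simp
  have hmap : μ.map (fun ω => (Y ω, Y' ω)) = ν.prod ν := by
    have h := (indepFun_iff_map_prod_eq_prod_map_map hY.aemeasurable hY'.aemeasurable).mp hInd
    rw [hYd, hY'd] at h
    exact h
  have hF : Measurable (fun p : ℝ × ℝ => Real.exp (-(t * p.1 * p.2))) := by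
    exact Real.measurable_exp.comp ((measurable_fst.const_mul t |>.mul measurable_snd).neg)
  have h1 : ∫ ω, Real.exp (-(t * Y ω * Y' ω)) ∂μ
      = ∫ p : ℝ × ℝ, Real.exp (-(t * p.1 * p.2)) ∂(ν.prod ν) := by
    rw [← hmap, integral_map (hY.prodMk hY').aemeasurable hF.aestronglyMeasurable]
  have haeP : ∀ᵐ p : ℝ × ℝ ∂(ν.prod ν), 0 ≤ p.1 ∧ 0 ≤ p.2 := by
    rw [ae_iff]
    have hset : {p : ℝ × ℝ | ¬ (0 ≤ p.1 ∧ 0 ≤ p.2)} = (Ici (0:ℝ) ×ˢ Ici (0:ℝ))ᶜ := by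
      ext p
      rw [Set.mem_compl_iff, Set.mem_prod, Set.mem_Ici, Set.mem_Ici]
      exact Iff.rfl
    rw [hset, measure_compl (measurableSet_Ici.prod measurableSet_Ici) (measure_ne_top _ _),
      Measure.prod_prod, hνIci, measure_univ]
    simp
  have hFint : Integrable (fun p : ℝ × ℝ => Real.exp (-(t * p.1 * p.2))) (ν.prod ν) := by
    refine (integrable_const (1:ℝ)).mono' hF.aestronglyMeasurable ?_
    filter_upwards [haeP] with p hp
    rw [Real.norm_eq_abs, abs_of_nonneg (Real.exp_pos _).le]
    refine Real.exp_le_one_iff.mpr ?_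
    have := mul_nonneg (mul_nonneg ht.le hp.1) hp.2
    linarith
  rw [h1, integral_prod _ hFint]
  have hg1int : Integrable (fun x => ∫ y, Real.exp (-(t * x * y)) ∂ν) ν :=
    hFint.integral_prod_left
  have hhmeas : Measurable (fun x : ℝ => 1 / (1 + t * (1 - Real.exp (-x)))) :=
    measurable_const.div (measurable_const.add (measurable_const.mul
      (measurable_const.sub (Real.measurable_exp.comp measurable_neg))))
  have hdenom : ∀ x : ℝ, 0 ≤ x → 1 ≤ 1 + t * (1 - Real.exp (-x)) := by
    intro x hx
    have h2 : Real.exp (-x) ≤ 1 := Real.exp_le_one_iff.mpr (by linarith)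
    nlinarith
  have hhint : Integrable (fun x : ℝ => 1 / (1 + t * (1 - Real.exp (-x)))) ν := by
    refine (integrable_const (1:ℝ)).mono' hhmeas.aestronglyMeasurable ?_
    filter_upwards [hνae] with x hx
    have h1x := hdenom x hx
    rw [Real.norm_eq_abs, abs_of_nonneg (by positivity)]
    rw [div_le_one (by linarith)]; linarith
  have hle : ∀ᵐ x ∂ν, (∫ y, Real.exp (-(t * x * y)) ∂ν)
      ≤ 1 / (1 + t * (1 - Real.exp (-x))) := by
    filter_upwards [hνae] with x hx
    have hb : 0 < 1 + t * x := by nlinarith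
    have hval : (∫ y, Real.exp (-(t * x * y)) ∂ν) = 1 / (1 + t * x) := by
      rw [hν, aux_expMeasure_integral (fun y => Real.exp (-(t * x * y)))]
      rw [show (fun y => Real.exp (-y) * Real.exp (-(t * x * y)))
          = fun y => Real.exp (-((1 + t * x) * y)) from funext fun y => by
        rw [← Real.exp_add]; ring_nf]
      exact aux_int_exp _ hb
    rw [hval]
    have hex : 1 - Real.exp (-x) ≤ x := by
      have := Real.add_one_le_exp (-x); linarith
    refine one_div_le_one_div_of_le ?_ ?_
    · have h2 : Real.exp (-x) ≤ 1 := Real.exp_le_one_iff.mpr (by linarith)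
      nlinarith
    · nlinarith
  calc (∫ x, ∫ y, Real.exp (-(t * x * y)) ∂ν ∂ν)
      ≤ ∫ x, 1 / (1 + t * (1 - Real.exp (-x))) ∂ν := integral_mono_ae hg1int hhint hle
    _ = Real.log (1 + t) / t := by
        rw [hν, aux_expMeasure_integral (fun x => 1 / (1 + t * (1 - Real.exp (-x))))]
        exact aux_final t ht
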